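/- arXiv:2302.09535 — 7 statements merged into one kernel-verified Lean document; each statement's English description precedes it below -/
import Mathlib

section
/- Let O be a commutative ring, α, β ∈ O with αβ = 2, and let δ : S → S be an O-linear map on a commutative O-algebra S satisfying δ(st) = δ(s)t + sδ(t) + αδ(s)δ(t) and δ∘δ = −βδ. For u, v ∈ S define x := u(u + αδ(u)), y := v(v + αδ(v)), z := βuv + δ(u)v + uδ(v), a := βu + δ(u), b := βv + δ(v). Then x, y, z, a, b are all fixed by δ (i.e. δ(x) = δ(y) = δ(z) = δ(a) = δ(b) = 0). -/
/-- With `δ` encoding a `G_{α,β}`-action on `Spec S` (so `α * β = 2`,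
twisted Leibniz rule, `δ ∘ δ = -β • δ`), the elements
`x = u(u + αδu)`, `y = v(v + αδv)`, `z = βuv + δ(u)v + uδ(v)`,
`a = βu + δu`, `b = βv + δv` are all killed by `δ` (i.e. invariant). -/
theorem stmt1 (O S : Type*) [CommRing O] [CommRing S] [Algebra O S]
    (α β : O) (hαβ : α * β = 2) (δ : S →ₗ[O] S)
    (hmul : ∀ s t : S, δ (s * t) = δ s * t + s * δ t + α • (δ s * δ t))
    (hcomp : ∀ s : S, δ (δ s) = -(β • δ s))
    (u v : S)
    (x : S) (hx : x = u * (u + α • δ u))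
    (y : S) (hy : y = v * (v + α • δ v))
    (z : S) (hz : z = β • (u * v) + δ u * v + u * δ v)
    (a : S) (ha : a = β • u + δ u)
    (b : S) (hb : b = β • v + δ v) :
    δ x = 0 ∧ δ y = 0 ∧ δ z = 0 ∧ δ a = 0 ∧ δ b = 0 := by
  subst hx hy hz ha hb
  have h2 : (algebraMap O S α) * (algebraMap O S β) = 2 := by
    rw [← map_mul, hαβ, map_ofNat]
  refine ⟨?_, ?_, ?_, ?_, ?_⟩ <;>
    simp only [hmul, map_add, map_smul, hcomp] <;>
    simp only [Algebra.smul_def, map_neg]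
  · linear_combination (-(δ u * u) - algebraMap O S α * δ u ^ 2) * h2
  · linear_combination (-(δ v * v) - algebraMap O S α * δ v ^ 2) * h2
  · linear_combination (-(δ u * δ v)) * h2
  · linear_combination (0 : S) * h2
  · linear_combination (0 : S) * h2
end

section
/- Let O be a commutative ring, α, β ∈ O with αβ = 2, let S be a commutative O-algebra with δ : S → S satisfying δ(st) = δ(s)t + sδ(t) + αδ(s)δ(t) and δ∘δ = −βδ. For u, v ∈ S define x, y, z, a, b as before, and set z' := z + αδ(u)δ(v). Then z + z' = αab and z·z' = a²y + b²x − β²xy; consequently z² − αabz + a²y + b²x − β²xy = 0. -/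
/-- With notation as in the Tate–Oort quotient construction, setting
`z' = z + α δ(u) δ(v)` one has `z + z' = α a b` and `z z' = a² y + b² x − β² x y`,
hence the relation `z² − α a b z + a² y + b² x − β² x y = 0`. -/
theorem stmt2 (O S : Type*) [CommRing O] [CommRing S] [Algebra O S]
    (α β : O) (hαβ : α * β = 2) (δ : S →ₗ[O] S)
    (hmul : ∀ s t : S, δ (s * t) = δ s * t + s * δ t + α • (δ s * δ t))
    (hcomp : ∀ s : S, δ (δ s) = -(β • δ s))
    (u v : S)
    (x : S) (hx : x = u * (u + α • δ u))
    (y : S) (hy : y = v * (v + α • δ v))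
    (z : S) (hz : z = β • (u * v) + δ u * v + u * δ v)
    (a : S) (ha : a = β • u + δ u)
    (b : S) (hb : b = β • v + δ v)
    (z' : S) (hz' : z' = z + α • (δ u * δ v)) :
    z + z' = α • (a * b) ∧
    z * z' = a ^ 2 * y + b ^ 2 * x - (β ^ 2) • (x * y) ∧
    z ^ 2 - α • (a * b * z) + a ^ 2 * y + b ^ 2 * x - (β ^ 2) • (x * y) = 0 := by
  set A := algebraMap O S α with hA
  set B := algebraMap O S β with hB
  have hAB : A * B = 2 := by
    rw [hA, hB, ← map_mul, hαβ, map_ofNat]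
  subst hx hy hz ha hb hz'
  simp only [Algebra.smul_def, map_pow]
  refine ⟨?_, ?_, ?_⟩
  · linear_combination (-(B * u * v + u * δ v + δ u * v)) * hAB
  · linear_combination (u * v * δ u * δ v * (A * B - 1)) * hAB
  · linear_combination (-(u * v * δ u * δ v * (A * B - 1))
      - (B * u * v + u * δ v + δ u * v) * (B * (u*v) + δ u * v + u * δ v)) * hAB
end

section
/- Let k be an algebraically closed field of characteristic 2. A point (t₀ : t₁ : t₂ : t₃) ∈ P³(k) lies in Γ₁ ∩ Γ₂ if and only if it lies in Γ₁ and all its coordinates can be chosen in the subfield F₄ ⊆ k, i.e. Γ₁ ∩ Γ₂ = Γ₁(F₄). -/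
/-- Over an algebraically closed field `k` of characteristic 2, a point of
`P³(k)` (given by a nonzero coordinate vector `t`) lies on `Γ₁ ∩ Γ₂` if and only if it
lies on `Γ₁` and its coordinates can be simultaneously rescaled to lie in the subfield
`F₄ ⊆ k` (the set of solutions of `x⁴ = x`); i.e. `Γ₁ ∩ Γ₂ = Γ₁(F₄)`. -/
theorem stmt6 (k : Type*) [Field k] [IsAlgClosed k] [CharP k 2]
    (Γ₁ Γ₂ : Set (Fin 4 → k))
    (hΓ₁ : Γ₁ = {t | t 1 * t 2 - t 0 * t 3 = 0 ∧ (t 1) ^ 2 - t 0 * t 2 = 0 ∧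
      (t 2) ^ 2 - t 1 * t 3 = 0})
    (hΓ₂ : Γ₂ = {t | t 1 * t 2 - t 0 * t 3 = 0 ∧ (t 2) ^ 2 - t 0 * t 1 = 0 ∧
      (t 1) ^ 2 - t 2 * t 3 = 0})
    (t : Fin 4 → k) (ht : t ≠ 0) :
    (t ∈ Γ₁ ∩ Γ₂) ↔ (t ∈ Γ₁ ∧ ∃ c : k, c ≠ 0 ∧ ∀ i, (c * t i) ^ 4 = c * t i) := by
  subst hΓ₁ hΓ₂
  simp only [Set.mem_inter_iff, Set.mem_setOf_eq]
  constructor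
  · rintro ⟨⟨h1, h2, h3⟩, _, h4, h5⟩
    refine ⟨⟨h1, h2, h3⟩, ?_⟩
    by_cases ht1 : t 1 = 0
    · have ht2 : t 2 = 0 := by
        have h : t 2 ^ 2 = 0 := by linear_combination h4 + t 0 * ht1
        exact pow_eq_zero_iff (by norm_num) |>.mp h
      have h03 : t 0 * t 3 = 0 := by linear_combination -h1 + t 2 * ht1
      rcases mul_eq_zero.mp h03 with h0 | h3'
      · have ht3 : t 3 ≠ 0 := by
          intro h3''
          apply ht
          funext i
          fin_cases i <;> simp [h0, ht1, ht2, h3'']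
        refine ⟨(t 3)⁻¹, inv_ne_zero ht3, ?_⟩
        intro i
        fin_cases i <;> simp [h0, ht1, ht2] <;> field_simp
      · have ht0 : t 0 ≠ 0 := by
          intro h0''
          apply ht
          funext i
          fin_cases i <;> simp [h0'', ht1, ht2, h3']
        refine ⟨(t 0)⁻¹, inv_ne_zero ht0, ?_⟩
        intro i
        fin_cases i <;> simp [h3', ht1, ht2] <;> field_simp
    · have ht2 : t 2 ≠ 0 := by
        intro h
        apply ht1
        have h12 : t 1 ^ 2 = 0 := by linear_combination h2 + t 0 * h
        exact pow_eq_zero_iff (by norm_num) |>.mp h12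
      have ht0 : t 0 ≠ 0 := by
        intro h
        apply ht1
        have h12 : t 1 ^ 2 = 0 := by linear_combination h2 + t 2 * h
        exact pow_eq_zero_iff (by norm_num) |>.mp h12
      have e0 : t 1 * t 2 = t 0 ^ 2 := by
        have h : t 1 * t 2 * (t 1 * t 2 - t 0 ^ 2) = 0 := by
          linear_combination t 2 ^ 2 * h2 + t 0 * t 2 * h4
        rcases mul_eq_zero.mp h with h' | h'
        · exact absurd h' (mul_ne_zero ht1 ht2)
        · exact sub_eq_zero.mp h'
      have e3 : t 3 = t 0 := by
        apply mul_left_cancel₀ ht0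
        linear_combination -h1 + e0
      have e1 : t 1 ^ 3 = t 0 ^ 3 := by
        linear_combination t 1 * h2 + t 0 * e0
      have e2 : t 2 ^ 3 = t 0 ^ 3 := by
        linear_combination t 2 * h4 + t 0 * e0
      refine ⟨(t 0)⁻¹, inv_ne_zero ht0, ?_⟩
      intro i
      fin_cases i
      · show ((t 0)⁻¹ * t 0) ^ 4 = (t 0)⁻¹ * t 0
        field_simp
      · show ((t 0)⁻¹ * t 1) ^ 4 = (t 0)⁻¹ * t 1
        field_simp
        linear_combination e1
      · show ((t 0)⁻¹ * t 2) ^ 4 = (t 0)⁻¹ * t 2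
        field_simp
        linear_combination e2
      · show ((t 0)⁻¹ * t 3) ^ 4 = (t 0)⁻¹ * t 3
        rw [e3]; field_simp
  · rintro ⟨⟨h1, h2, h3⟩, c, hc, hF⟩
    refine ⟨⟨h1, h2, h3⟩, h1, ?_, ?_⟩
    all_goals {
      by_cases ht0 : t 0 = 0
      · have ht1 : t 1 = 0 := by
          have h : t 1 ^ 2 = 0 := by linear_combination h2 + t 2 * ht0
          exact pow_eq_zero_iff (by norm_num) |>.mp h
        have ht2 : t 2 = 0 := by
          have h : t 2 ^ 2 = 0 := by linear_combination h3 + t 3 * ht1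
          exact pow_eq_zero_iff (by norm_num) |>.mp h
        simp [ht1, ht2, ht0]
      · have hF0 := hF 0
        have hF1 := hF 1
        have k1 : c ^ 3 * t 0 ^ 3 = 1 := by
          apply mul_left_cancel₀ (mul_ne_zero hc ht0)
          linear_combination hF0
        have k2 : c ^ 3 * t 1 ^ 4 = t 1 := by
          apply mul_left_cancel₀ hc
          linear_combination hF1
        have g1 : t 2 ^ 2 - t 0 * t 1 = 0 := by
          have e : t 0 ^ 2 * c ^ 3 * (t 2 ^ 2 - t 0 * t 1) = 0 := by
            linear_combination (-(c ^ 3) * (t 0 * t 2 + t 1 ^ 2)) * h2 + k2 - t 1 * k1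
          rcases mul_eq_zero.mp e with h' | h'
          · exact absurd h' (mul_ne_zero (pow_ne_zero 2 ht0) (pow_ne_zero 3 hc))
          · exact h'
        have g2 : t 1 ^ 2 - t 2 * t 3 = 0 := by
          have e : t 0 * (t 1 ^ 2 - t 2 * t 3) = 0 := by
            linear_combination t 2 * h1 - t 1 * g1
          rcases mul_eq_zero.mp e with h' | h'
          · exact absurd h' ht0
          · exact h'
        first
        | exact g1
        | exact g2
    }
end

section
/- Let k be an algebraically closed field of characteristic 2 and let F = z² + x⁴y + xy⁴ + b₀²x³ + a₀²x²y + b₁²xy² + a₁²y³ ∈ k[x,y,z] with a₀, a₁, b₀, b₁ ∈ k not all zero. If a₀a₁ − b₀b₁ ≠ 0 (i.e. the point (b₀ : a₀ : b₁ : a₁) does not lie on the quadric t₁t₂ − t₀t₃ = 0), then the origin is a singular point of the surface F = 0 with Tyurina algebra k[x,y,z]/(F, F_x, F_y, F_z) of dimension 8 over k, i.e. the origin is a rational double point of type D₄⁰. -/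
open MvPolynomial

noncomputable section ProofAux
variable (k : Type*) [Field k]


abbrev R3 (k : Type*) [Field k] := MvPowerSeries (Fin 3) k

def sqIdeal : Ideal (R3 k) :=
  Ideal.span {(MvPowerSeries.X 0)^2, (MvPowerSeries.X 1)^2, (MvPowerSeries.X 2)^2}

def expOf (e : Fin 3 → Fin 2) : Fin 3 →₀ ℕ :=
  Finsupp.equivFunOnFinite.symm (fun i => (e i : ℕ))

lemma expOf_apply (e : Fin 3 → Fin 2) (i : Fin 3) : expOf e i = (e i : ℕ) := rfl

def phi : R3 k →ₗ[k] ((Fin 3 → Fin 2) → k) where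
  toFun f := fun e => MvPowerSeries.coeff (expOf e) f
  map_add' f g := by ext e; simp
  map_smul' c f := by ext e; simp [MvPowerSeries.coeff_smul]

lemma phi_apply (f : R3 k) (e : Fin 3 → Fin 2) :
    phi k f e = MvPowerSeries.coeff (expOf e) f := rfl

lemma expOf_injective : Function.Injective expOf := by
  intro e e' h
  funext i
  have := congrArg (fun g => g i) h
  simp only [expOf_apply] at this
  exact Fin.val_injective this

lemma phi_surj : Function.Surjective (phi k) := by
  classical
  intro h
  refine ⟨∑ e : Fin 3 → Fin 2, MvPowerSeries.monomial (expOf e) (h e), ?_⟩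
  funext e'
  rw [phi_apply, map_sum, Finset.sum_eq_single e']
  · simp [MvPowerSeries.coeff_monomial]
  · intro e _ hne
    rw [MvPowerSeries.coeff_monomial, if_neg (fun hEq => hne (expOf_injective hEq.symm))]
  · intro h'; exact absurd (Finset.mem_univ e') h'

lemma mem_sqIdeal_coeff_zero {f : R3 k} (hf : f ∈ sqIdeal k) :
    ∀ m : Fin 3 →₀ ℕ, (∀ i, m i ≤ 1) → MvPowerSeries.coeff m f = 0 := by
  classical
  refine Submodule.span_induction ?_ ?_ ?_ ?_ hf
  · rintro x hx m hm
    have key : ∀ i : Fin 3, MvPowerSeries.coeff m ((MvPowerSeries.X i : R3 k)^2) = 0 := by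
      intro i
      rw [MvPowerSeries.X_pow_eq, MvPowerSeries.coeff_monomial, if_neg]
      intro hEq
      have h2 := congrArg (fun g => g i) hEq
      simp [Finsupp.single_apply] at h2
      have := hm i
      omega
    simp only [Set.mem_insert_iff, Set.mem_singleton_iff] at hx
    rcases hx with h|h|h <;> rw [h] <;> exact key _
  · intro m _; simp
  · intro x y _ _ hx hy m hm
    simp [map_add, hx m hm, hy m hm]
  · intro r x _ hx m hm
    rw [smul_eq_mul, MvPowerSeries.coeff_mul]
    refine Finset.sum_eq_zero ?_
    rintro ⟨d, e⟩ hde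
    rw [Finset.HasAntidiagonal.mem_antidiagonal] at hde
    have he : ∀ i, e i ≤ 1 := fun i => by
      have h1 : d i + e i = m i := by rw [← hde]; simp
      have := hm i; omega
    rw [hx e he, mul_zero]

lemma ker_phi : LinearMap.ker (phi k) = (sqIdeal k).restrictScalars k := by
  classical
  ext f
  simp only [LinearMap.mem_ker, Submodule.restrictScalars_mem]
  constructor
  · intro hf
    have hsf : ∀ m : Fin 3 →₀ ℕ, (∀ i, m i ≤ 1) → MvPowerSeries.coeff m f = 0 := by
      intro m hm
      have h1 := congrFun hf (fun i => (⟨m i, by have := hm i; omega⟩ : Fin 2))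
      rw [phi_apply] at h1
      have : expOf (fun i => (⟨m i, by have := hm i; omega⟩ : Fin 2)) = m := by
        ext i; rw [expOf_apply]
      rwa [this] at h1
    set s₀ : Fin 3 →₀ ℕ := Finsupp.single 0 2 with hs₀
    set s₁ : Fin 3 →₀ ℕ := Finsupp.single 1 2 with hs₁
    set s₂ : Fin 3 →₀ ℕ := Finsupp.single 2 2 with hs₂
    set g₀ : R3 k := fun n => f (n + s₀) with hg₀
    set g₁ : R3 k := fun n => if n 0 ≤ 1 then f (n + s₁) else 0 with hg₁
    set g₂ : R3 k := fun n => if n 0 ≤ 1 ∧ n 1 ≤ 1 then f (n + s₂) else 0 with hg₂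
    have hdecomp : f = (MvPowerSeries.X 0)^2 * g₀ + (MvPowerSeries.X 1)^2 * g₁
        + (MvPowerSeries.X 2)^2 * g₂ := by
      ext m
      rw [map_add, map_add, MvPowerSeries.X_pow_eq, MvPowerSeries.X_pow_eq,
        MvPowerSeries.X_pow_eq, MvPowerSeries.coeff_monomial_mul,
        MvPowerSeries.coeff_monomial_mul, MvPowerSeries.coeff_monomial_mul]
      have hle0 : s₀ ≤ m ↔ 2 ≤ m 0 := by rw [hs₀, Finsupp.single_le_iff]
      have hle1 : s₁ ≤ m ↔ 2 ≤ m 1 := by rw [hs₁, Finsupp.single_le_iff]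
      have hle2 : s₂ ≤ m ↔ 2 ≤ m 2 := by rw [hs₂, Finsupp.single_le_iff]
      have hsub0 : ∀ j, (m - s₀) j = m j - s₀ j := fun j => Finsupp.tsub_apply m s₀ j
      have hsub1 : ∀ j, (m - s₁) j = m j - s₁ j := fun j => Finsupp.tsub_apply m s₁ j
      have hsub2 : ∀ j, (m - s₂) j = m j - s₂ j := fun j => Finsupp.tsub_apply m s₂ j
      have hs₀0 : s₀ 0 = 2 := by rw [hs₀]; simp
      have hs₀1 : s₀ 1 = 0 := by rw [hs₀]; simp [Finsupp.single_apply]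
      have hs₁0 : s₁ 0 = 0 := by rw [hs₁]; simp [Finsupp.single_apply]
      have hs₁1 : s₁ 1 = 2 := by rw [hs₁]; simp
      have hs₂0 : s₂ 0 = 0 := by rw [hs₂]; simp [Finsupp.single_apply]
      have hs₂1 : s₂ 1 = 0 := by rw [hs₂]; simp [Finsupp.single_apply]
      have hcoeffg₀ : ∀ n, MvPowerSeries.coeff n g₀ = f (n + s₀) := fun n => rfl
      have hcoeffg₁ : ∀ n, MvPowerSeries.coeff n g₁
          = if n 0 ≤ 1 then f (n + s₁) else 0 := fun n => rfl
      have hcoeffg₂ : ∀ n, MvPowerSeries.coeff n g₂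
          = if n 0 ≤ 1 ∧ n 1 ≤ 1 then f (n + s₂) else 0 := fun n => rfl
      have hfm : MvPowerSeries.coeff m f = f m := rfl
      by_cases h0 : 2 ≤ m 0
      · rw [if_pos (hle0.2 h0), hcoeffg₀, tsub_add_cancel_of_le (hle0.2 h0)]
        have t1 : (if s₁ ≤ m then 1 * MvPowerSeries.coeff (m - s₁) g₁ else 0) = 0 := by
          split_ifs with h
          · rw [hcoeffg₁, if_neg (by rw [hsub1 0, hs₁0]; omega), mul_zero]
          · rfl
        have t2 : (if s₂ ≤ m then 1 * MvPowerSeries.coeff (m - s₂) g₂ else 0) = 0 := by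
          split_ifs with h
          · rw [hcoeffg₂, if_neg (by rw [hsub2 0, hs₂0]; omega), mul_zero]
          · rfl
        rw [t1, t2, hfm]; ring
      · by_cases h1 : 2 ≤ m 1
        · rw [if_neg (fun h => h0 (hle0.1 h)), if_pos (hle1.2 h1), hcoeffg₁,
            if_pos (by rw [hsub1 0, hs₁0]; omega), tsub_add_cancel_of_le (hle1.2 h1)]
          have t2 : (if s₂ ≤ m then 1 * MvPowerSeries.coeff (m - s₂) g₂ else 0) = 0 := by
            split_ifs with h
            · rw [hcoeffg₂, if_neg (by rw [hsub2 0, hsub2 1, hs₂0, hs₂1]; omega), mul_zero]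
            · rfl
          rw [t2, hfm]; ring
        · by_cases h2 : 2 ≤ m 2
          · rw [if_neg (fun h => h0 (hle0.1 h)), if_neg (fun h => h1 (hle1.1 h)),
              if_pos (hle2.2 h2), hcoeffg₂,
              if_pos (by constructor <;> [rw [hsub2 0, hs₂0]; rw [hsub2 1, hs₂1]] <;> omega),
              tsub_add_cancel_of_le (hle2.2 h2), hfm]
            ring
          · rw [if_neg (fun h => h0 (hle0.1 h)), if_neg (fun h => h1 (hle1.1 h)),
              if_neg (fun h => h2 (hle2.1 h))]
            have hall : ∀ i : Fin 3, m i ≤ 1 := by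
              intro i
              fin_cases i <;>
                first
                | exact (show m 0 ≤ 1 by omega)
                | exact (show m 1 ≤ 1 by omega)
                | exact (show m 2 ≤ 1 by omega)
            rw [hsf m hall]
            ring
    rw [hdecomp]
    refine Ideal.add_mem _ (Ideal.add_mem _ ?_ ?_) ?_ <;>
      exact Ideal.mul_mem_right _ _ (Ideal.subset_span (by simp))
  · intro hf
    funext e
    rw [phi_apply]
    exact mem_sqIdeal_coeff_zero k hf _ (fun i => by
      rw [expOf_apply]; have := (e i).isLt; omega)

lemma finrank_sq : Module.finrank k (R3 k ⧸ sqIdeal k) = 8 := by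
  have e1 : (R3 k ⧸ (sqIdeal k).restrictScalars k) ≃ₗ[k] ((Fin 3 → Fin 2) → k) := by
    rw [← ker_phi]
    exact LinearMap.quotKerEquivOfSurjective _ (phi_surj k)
  have e2 : (R3 k ⧸ (sqIdeal k).restrictScalars k) ≃ₗ[k] (R3 k ⧸ sqIdeal k) :=
    Submodule.Quotient.restrictScalarsEquiv k (sqIdeal k)
  rw [← e2.finrank_eq, e1.finrank_eq, Module.finrank_pi]
  simp
lemma idealEq (k : Type*) [Field k] [CharP k 2]
    (a₀ a₁ b₀ b₁ : k)
    (hquad : a₀ * b₁ - b₀ * a₁ ≠ 0)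
    (F : MvPolynomial (Fin 3) k)
    (hFx : pderiv 0 F = X 1 ^ 4 + C (b₀ ^ 2) * X 0 ^ 2 + C (b₁ ^ 2) * X 1 ^ 2)
    (hFy : pderiv 1 F = X 0 ^ 4 + C (a₀ ^ 2) * X 0 ^ 2 + C (a₁ ^ 2) * X 1 ^ 2)
    (hFz : pderiv 2 F = 0)
    (hFr : F = X 2 ^ 2 + X 0 * pderiv 0 F + X 1 * pderiv 1 F) :
    Ideal.span {(F : MvPowerSeries (Fin 3) k),
          ((pderiv 0 F : MvPolynomial (Fin 3) k) : MvPowerSeries (Fin 3) k),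
          ((pderiv 1 F : MvPolynomial (Fin 3) k) : MvPowerSeries (Fin 3) k),
          ((pderiv 2 F : MvPolynomial (Fin 3) k) : MvPowerSeries (Fin 3) k)} = sqIdeal k := by
  classical
  have h2k : (2 : k) = 0 := by
    have : ((2:ℕ) : k) = 0 := CharP.cast_eq_zero _ 2
    exact_mod_cast this
  set R := R3 k
  set u : R := (MvPowerSeries.X 0)^2 with hu
  set v : R := (MvPowerSeries.X 1)^2 with hv
  set w : R := (MvPowerSeries.X 2)^2 with hw
  set Ca₀ : R := MvPowerSeries.C a₀ with hCa₀
  set Ca₁ : R := MvPowerSeries.C a₁ with hCa₁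
  set Cb₀ : R := MvPowerSeries.C b₀ with hCb₀
  set Cb₁ : R := MvPowerSeries.C b₁ with hCb₁
  have h2R : (2 : R) = 0 := by
    rw [← map_ofNat (MvPowerSeries.C (σ := Fin 3) (R := k)) 2, h2k, map_zero]
  -- the casts
  have hcx : ((pderiv 0 F : MvPolynomial (Fin 3) k) : R) = v^2 + Cb₀^2 * u + Cb₁^2 * v := by
    rw [hFx]
    push_cast [MvPolynomial.coe_add, MvPolynomial.coe_mul, MvPolynomial.coe_pow,
      MvPolynomial.coe_C, MvPolynomial.coe_X]
    rw [hu, hv]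
    push_cast [map_pow]
    ring
  have hcy : ((pderiv 1 F : MvPolynomial (Fin 3) k) : R) = u^2 + Ca₀^2 * u + Ca₁^2 * v := by
    rw [hFy]
    push_cast [MvPolynomial.coe_add, MvPolynomial.coe_mul, MvPolynomial.coe_pow,
      MvPolynomial.coe_C, MvPolynomial.coe_X]
    rw [hu, hv]
    push_cast [map_pow]
    ring
  have hcz : ((pderiv 2 F : MvPolynomial (Fin 3) k) : R) = 0 := by
    rw [hFz, MvPolynomial.coe_zero]
  have hcF : (F : R) = w + MvPowerSeries.X 0 * ((pderiv 0 F : MvPolynomial (Fin 3) k) : R)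
      + MvPowerSeries.X 1 * ((pderiv 1 F : MvPolynomial (Fin 3) k) : R) := by
    conv_lhs => rw [hFr]
    push_cast [MvPolynomial.coe_add, MvPolynomial.coe_mul, MvPolynomial.coe_pow,
      MvPolynomial.coe_X]
    rw [hw]
  -- memberships for ⊆
  have humem : u ∈ sqIdeal k := Ideal.subset_span (by left; rfl)
  have hvmem : v ∈ sqIdeal k := Ideal.subset_span (by right; left; rfl)
  have hwmem : w ∈ sqIdeal k := Ideal.subset_span (by right; right; rfl)
  have hxmem : ((pderiv 0 F : MvPolynomial (Fin 3) k) : R) ∈ sqIdeal k := by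
    rw [hcx]
    exact Ideal.add_mem _ (Ideal.add_mem _ (Ideal.mul_mem_left _ _ hvmem)
      (Ideal.mul_mem_left _ _ humem)) (Ideal.mul_mem_left _ _ hvmem)
  have hymem : ((pderiv 1 F : MvPolynomial (Fin 3) k) : R) ∈ sqIdeal k := by
    rw [hcy]
    exact Ideal.add_mem _ (Ideal.add_mem _ (Ideal.mul_mem_left _ _ humem)
      (Ideal.mul_mem_left _ _ humem)) (Ideal.mul_mem_left _ _ hvmem)
  have hFmem : (F : R) ∈ sqIdeal k := by
    rw [hcF]
    exact Ideal.add_mem _ (Ideal.add_mem _ hwmem (Ideal.mul_mem_left _ _ hxmem))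
      (Ideal.mul_mem_left _ _ hymem)
  apply le_antisymm
  · rw [Ideal.span_le]
    rintro x hx
    simp only [Set.mem_insert_iff, Set.mem_singleton_iff] at hx
    rcases hx with h|h|h|h <;> subst h
    · exact hFmem
    · exact hxmem
    · exact hymem
    · rw [hcz]; exact Ideal.zero_mem _
  · -- sqIdeal ≤ span
    set I := Ideal.span {(F : R),
          ((pderiv 0 F : MvPolynomial (Fin 3) k) : R),
          ((pderiv 1 F : MvPolynomial (Fin 3) k) : R),
          ((pderiv 2 F : MvPolynomial (Fin 3) k) : R)} with hI
    have hFI : (F : R) ∈ I := Ideal.subset_span (by left; rfl)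
    have hFxI : ((pderiv 0 F : MvPolynomial (Fin 3) k) : R) ∈ I :=
      Ideal.subset_span (by right; left; rfl)
    have hFyI : ((pderiv 1 F : MvPolynomial (Fin 3) k) : R) ∈ I :=
      Ideal.subset_span (by right; right; left; rfl)
    have hwI : w ∈ I := by
      have : w = (F : R) - MvPowerSeries.X 0 * ((pderiv 0 F : MvPolynomial (Fin 3) k) : R)
          - MvPowerSeries.X 1 * ((pderiv 1 F : MvPolynomial (Fin 3) k) : R) := by
        rw [hcF]; ring
      rw [this]
      exact Ideal.sub_mem _ (Ideal.sub_mem _ hFI (Ideal.mul_mem_left _ _ hFxI))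
        (Ideal.mul_mem_left _ _ hFyI)
    -- the two auxiliary combinations
    set s' : R := Cb₁^2 * ((pderiv 1 F : MvPolynomial (Fin 3) k) : R)
        + Ca₁^2 * ((pderiv 0 F : MvPolynomial (Fin 3) k) : R) with hs'
    set t' : R := Cb₀^2 * ((pderiv 1 F : MvPolynomial (Fin 3) k) : R)
        + Ca₀^2 * ((pderiv 0 F : MvPolynomial (Fin 3) k) : R) with ht'
    have hs'I : s' ∈ I := Ideal.add_mem _ (Ideal.mul_mem_left _ _ hFyI)
      (Ideal.mul_mem_left _ _ hFxI)
    have ht'I : t' ∈ I := Ideal.add_mem _ (Ideal.mul_mem_left _ _ hFyI)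
      (Ideal.mul_mem_left _ _ hFxI)
    set CE : R := Ca₀^2 * Cb₁^2 + Ca₁^2 * Cb₀^2 with hCE
    have hs'eq : s' = CE * u + Cb₁^2 * u^2 + Ca₁^2 * v^2 := by
      rw [hs', hcx, hcy, hCE]
      linear_combination (Ca₁^2 * Cb₁^2 * v) * h2R
    have ht'eq : t' = CE * v + Cb₀^2 * u^2 + Ca₀^2 * v^2 := by
      rw [ht', hcx, hcy, hCE]
      linear_combination (Ca₀^2 * Cb₀^2 * u) * h2R
    set det : R := (CE + Ca₀^2 * v) * (CE + Cb₁^2 * u) + Ca₁^2 * Cb₀^2 * u * v with hdet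
    have hkeyu : det * u = (CE + Ca₀^2 * v) * s' + Ca₁^2 * v * t' := by
      rw [hs'eq, ht'eq, hdet]
      linear_combination (Ca₁^2 * v * (CE * v + Ca₀^2 * v^2)
        - 2*(Ca₀^2*Cb₁^2*Ca₁^2*v^2 + Ca₀^2*Ca₁^2*v^3 + Ca₁^4*Cb₀^2*v^2)) * h2R
    have hkeyv : det * v = Cb₀^2 * u * s' + (CE + Cb₁^2 * u) * t' := by
      rw [hs'eq, ht'eq, hdet]
      linear_combination (Cb₀^2 * u * (CE * u + Cb₁^2 * u^2)
        - 2*(Ca₀^2*Cb₁^2*Cb₀^2*u^2 + Cb₁^2*Cb₀^2*u^3 + Ca₁^2*Cb₀^4*u^2)) * h2R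
    -- det is a unit
    have hE : a₀^2 * b₁^2 + a₁^2 * b₀^2 ≠ 0 := by
      intro h
      apply hquad
      have hD : (a₀ * b₁ - b₀ * a₁)^2 = a₀^2 * b₁^2 + a₁^2 * b₀^2 := by
        linear_combination (-(a₀*b₁*b₀*a₁)) * h2k
      have := pow_eq_zero_iff (n := 2) (by norm_num) |>.mp (by rw [hD, h])
      exact this
    have hdetunit : IsUnit det := by
      rw [MvPowerSeries.isUnit_iff_constantCoeff]
      have : MvPowerSeries.constantCoeff det
          = (a₀^2 * b₁^2 + a₁^2 * b₀^2) * (a₀^2 * b₁^2 + a₁^2 * b₀^2) := by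
        rw [hdet, hCE, hu, hv, hCa₀, hCa₁, hCb₀, hCb₁]
        simp [map_add, map_mul, map_pow, MvPowerSeries.constantCoeff_C,
          MvPowerSeries.constantCoeff_X]
      rw [this]
      exact (mul_ne_zero hE hE).isUnit
    have huI : u ∈ I := by
      have : u = ↑hdetunit.unit⁻¹ * ((CE + Ca₀^2 * v) * s' + Ca₁^2 * v * t') := by
        rw [← hkeyu, ← mul_assoc]
        rw [IsUnit.val_inv_mul]
        rw [one_mul]
      rw [this]
      exact Ideal.mul_mem_left _ _ (Ideal.add_mem _ (Ideal.mul_mem_left _ _ hs'I)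
        (Ideal.mul_mem_left _ _ ht'I))
    have hvI : v ∈ I := by
      have : v = ↑hdetunit.unit⁻¹ * (Cb₀^2 * u * s' + (CE + Cb₁^2 * u) * t') := by
        rw [← hkeyv, ← mul_assoc, IsUnit.val_inv_mul, one_mul]
      rw [this]
      exact Ideal.mul_mem_left _ _ (Ideal.add_mem _ (Ideal.mul_mem_left _ _ hs'I)
        (Ideal.mul_mem_left _ _ ht'I))
    rw [sqIdeal, Ideal.span_le]
    rintro x hx
    simp only [Set.mem_insert_iff, Set.mem_singleton_iff] at hx
    rcases hx with h|h|h <;> subst h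
    · exact huI
    · exact hvI
    · exact hwI

end ProofAux

/-- Over an algebraically closed field `k` of characteristic 2, for
`F = z² + x⁴y + xy⁴ + b₀²x³ + a₀²x²y + b₁²xy² + a₁²y³` with `(a₀, a₁, b₀, b₁)` not all
zero, if the point `(b₀ : a₀ : b₁ : a₁)` does not lie on the quadric `t₁t₂ − t₀t₃ = 0`
(i.e. `a₀ b₁ − b₀ a₁ ≠ 0`), then the origin is a singular point of `F = 0` and its
Tyurina algebra `k[[x,y,z]]/(F, Fₓ, F_y, F_z)` has `k`-dimension 8, i.e. the origin is a
rational double point of type `D₄⁰`. -/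
theorem stmt7 (k : Type*) [Field k] [IsAlgClosed k] [CharP k 2]
    (a₀ a₁ b₀ b₁ : k) (hne : ¬(a₀ = 0 ∧ a₁ = 0 ∧ b₀ = 0 ∧ b₁ = 0))
    (hquad : a₀ * b₁ - b₀ * a₁ ≠ 0)
    (F : MvPolynomial (Fin 3) k)
    (hF : F = X 2 ^ 2 + X 0 ^ 4 * X 1 + X 0 * X 1 ^ 4 + C (b₀ ^ 2) * X 0 ^ 3
      + C (a₀ ^ 2) * X 0 ^ 2 * X 1 + C (b₁ ^ 2) * X 0 * X 1 ^ 2 + C (a₁ ^ 2) * X 1 ^ 3) :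
    (eval (0 : Fin 3 → k) F = 0 ∧ ∀ i, eval (0 : Fin 3 → k) (pderiv i F) = 0) ∧
    Module.finrank k
      (MvPowerSeries (Fin 3) k ⧸
        Ideal.span {(F : MvPowerSeries (Fin 3) k),
          ((pderiv 0 F : MvPolynomial (Fin 3) k) : MvPowerSeries (Fin 3) k),
          ((pderiv 1 F : MvPolynomial (Fin 3) k) : MvPowerSeries (Fin 3) k),
          ((pderiv 2 F : MvPolynomial (Fin 3) k) : MvPowerSeries (Fin 3) k)}) = 8 := by
  have h2 : (2 : MvPolynomial (Fin 3) k) = 0 := by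
    have : ((2:ℕ) : MvPolynomial (Fin 3) k) = 0 := CharP.cast_eq_zero _ 2
    exact_mod_cast this
  have hFx : pderiv 0 F = X 1 ^ 4 + C (b₀ ^ 2) * X 0 ^ 2 + C (b₁ ^ 2) * X 1 ^ 2 := by
    subst hF
    simp [pderiv_X, Pi.single_apply]
    linear_combination (2 * X 0^3 * X 1 + C b₀^2 * X 0^2 + C a₀^2 * X 0 * X 1) * h2
  have hFy : pderiv 1 F = X 0 ^ 4 + C (a₀ ^ 2) * X 0 ^ 2 + C (a₁ ^ 2) * X 1 ^ 2 := by
    subst hF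
    simp [pderiv_X, Pi.single_apply]
    linear_combination (2 * X 0 * X 1^3 + C b₁^2 * X 0 * X 1 + C a₁^2 * X 1^2) * h2
  have hFz : pderiv 2 F = 0 := by
    subst hF
    simp [pderiv_X, Pi.single_apply]
    linear_combination h2
  have hFr : F = X 2 ^ 2 + X 0 * pderiv 0 F + X 1 * pderiv 1 F := by
    rw [hFx, hFy, hF]; ring
  constructor
  · constructor
    · simp [hF]
    · intro i
      fin_cases i <;> simp [hFx, hFy, hFz]
  · rw [idealEq k a₀ a₁ b₀ b₁ hquad F hFx hFy hFz hFr]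
    exact finrank_sq k
end

section
/- Let O be a commutative ring, α, β ∈ O with αβ = 2, and let e ∈ O be a unit. Then the Hopf algebras O[X]/(X² − αX) with comultiplication X ↦ X⊗1 + 1⊗X − βX⊗X and O[X']/(X'² − eαX') with comultiplication X' ↦ X'⊗1 + 1⊗X' − e⁻¹βX'⊗X' are isomorphic via X' ↦ eX; i.e. G_{α,β} ≅ G_{eα, e⁻¹β} as group schemes over O. -/
open Polynomial
open scoped TensorProduct

/-- The Tate–Oort algebra `O[X]/(X² − aX)` underlying the group scheme `G_{a,b}`. -/
abbrev TateOortAlgebra (O : Type*) [CommRing O] (a : O) : Type _ :=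
  AdjoinRoot ((X : O[X]) ^ 2 - C a * X)

/-- The generator `X` of the Tate–Oort algebra. -/
noncomputable abbrev TateOortGen (O : Type*) [CommRing O] (a : O) : TateOortAlgebra O a :=
  AdjoinRoot.root _

lemma gen_sq (O : Type*) [CommRing O] (a : O) :
    (TateOortGen O a) ^ 2 - (algebraMap O _ a) * TateOortGen O a = 0 := by
  have h : AdjoinRoot.mk ((X : O[X]) ^ 2 - C a * X) ((X : O[X]) ^ 2 - C a * X) = 0 :=
    AdjoinRoot.mk_self
  simpa [map_sub, map_mul, map_pow] using h

lemma aeval_smul_gen (O : Type*) [CommRing O] (a c : O) (u : Oˣ) (h : (u : O) * a = c) :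
    aeval ((u : O) • TateOortGen O a) ((X : O[X]) ^ 2 - C c * X) = 0 := by
  subst h
  have h0 := gen_sq O a
  have key : aeval ((u : O) • TateOortGen O a) ((X : O[X]) ^ 2 - C ((u : O) * a) * X)
      = ((u : O) ^ 2) • ((TateOortGen O a) ^ 2
        - algebraMap O (TateOortAlgebra O a) a * TateOortGen O a) := by
    simp only [map_sub, map_mul, map_pow, aeval_X, aeval_C, Algebra.smul_def, smul_sub]
    ring
  rw [key, h0, smul_zero]

/-- For `α β : O` with `αβ = 2` and a unit `e`, the Tate–Oort Hopf algebras
`O[X']/(X'² − eαX')` (comultiplication `X' ↦ X'⊗1 + 1⊗X' − e⁻¹β X'⊗X'`) and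
`O[X]/(X² − αX)` (comultiplication `X ↦ X⊗1 + 1⊗X − β X⊗X`) are isomorphic via
`X' ↦ eX`; i.e. `G_{α,β} ≅ G_{eα, e⁻¹β}`.  Compatibility with the comultiplications on
the generator reads `(f⊗f)(Δ'(X')) = Δ(eX)`, both sides written out explicitly (as both
Hopf algebras are generated by their generators, this is equivalent to a Hopf algebra
isomorphism). -/
theorem stmt14 (O : Type*) [CommRing O] (α β : O) (hαβ : α * β = 2) (e : Oˣ) :
    ∃ f : TateOortAlgebra O ((e : O) * α) ≃ₐ[O] TateOortAlgebra O α,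
      f (TateOortGen O ((e : O) * α)) = (e : O) • TateOortGen O α ∧
      ((e : O) • TateOortGen O α) ⊗ₜ[O] (1 : TateOortAlgebra O α)
          + (1 : TateOortAlgebra O α) ⊗ₜ[O] ((e : O) • TateOortGen O α)
          - (((e⁻¹ : Oˣ) : O) * β) •
            (((e : O) • TateOortGen O α) ⊗ₜ[O] ((e : O) • TateOortGen O α)) =
        (e : O) • (TateOortGen O α ⊗ₜ[O] (1 : TateOortAlgebra O α)
          + (1 : TateOortAlgebra O α) ⊗ₜ[O] TateOortGen O α
          - β • (TateOortGen O α ⊗ₜ[O] TateOortGen O α)) := by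
  have hf : aeval ((e : O) • TateOortGen O α) ((X : O[X]) ^ 2 - C ((e : O) * α) * X) = 0 :=
    aeval_smul_gen O α _ e rfl
  have hg : aeval (((e⁻¹ : Oˣ) : O) • TateOortGen O ((e : O) * α))
      ((X : O[X]) ^ 2 - C α * X) = 0 := by
    refine aeval_smul_gen O ((e : O) * α) α e⁻¹ ?_
    rw [← mul_assoc, Units.inv_mul, one_mul]
  let F : TateOortAlgebra O ((e : O) * α) →ₐ[O] TateOortAlgebra O α :=
    AdjoinRoot.liftAlgHom _ (Algebra.ofId _ _) _
      (by rw [Algebra.toRingHom_ofId, ← aeval_def]; exact hf)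
  let G : TateOortAlgebra O α →ₐ[O] TateOortAlgebra O ((e : O) * α) :=
    AdjoinRoot.liftAlgHom _ (Algebra.ofId _ _) _
      (by rw [Algebra.toRingHom_ofId, ← aeval_def]; exact hg)
  refine ⟨AlgEquiv.ofAlgHom F G ?_ ?_, ?_, ?_⟩
  · apply AdjoinRoot.algHom_ext
    simp [F, G, AdjoinRoot.liftAlgHom_root, smul_smul]
  · apply AdjoinRoot.algHom_ext
    simp [F, G, AdjoinRoot.liftAlgHom_root, smul_smul]
  · simp [F, AdjoinRoot.liftAlgHom_root]
  · simp only [smul_sub, smul_add, TensorProduct.smul_tmul', TensorProduct.tmul_smul,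
      smul_smul]
    have hs : ((e⁻¹ : Oˣ) : O) * β * ((e : O) * (e : O)) = (e : O) * β := by
      linear_combination (β * (e : O)) * e.inv_mul
    rw [hs]
end

section
/- Let k be an algebraically closed field of characteristic 2 and let a₁₀, a₀₁, b₁₀, b₀₁ ∈ k, not all zero. Consider F = z² + x⁴y + xy⁴ + b₁₀²x³ + a₁₀²x²y + b₀₁²xy² + a₀₁²y³ in k[x,y,z]. The singular locus of the affine surface F = 0 is the finite set {(x,y,0) : a(x,y) = b(x,y) = 0} where a = x² + a₁₀x + a₀₁y and b = y² + b₁₀x + b₀₁y; in particular it is contained in the plane z = 0 and has at most 4 points. -/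
open MvPolynomial

theorem aux_rootset4 {k : Type*} [Field k] [DecidableEq k] (q : Polynomial k)
    (hm : q.Monic) (hd : q.natDegree ≤ 4) :
    {x | q.IsRoot x}.Finite ∧ {x | q.IsRoot x}.ncard ≤ 4 := by
  have hq := hm.ne_zero
  refine ⟨Polynomial.finite_setOf_isRoot hq, ?_⟩
  have : {x | q.IsRoot x} = ↑q.roots.toFinset := by
    ext x; simp [Polynomial.mem_roots, hq, Polynomial.IsRoot]
  rw [this, Set.ncard_coe_finset]
  calc q.roots.toFinset.card ≤ Multiset.card q.roots := q.roots.toFinset_card_le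
    _ ≤ q.natDegree := q.card_roots'
    _ ≤ 4 := hd

theorem aux_transfer {α β : Type*} {S : Set α} {R : Set β} (f : α → β)
    (hinj : Set.InjOn f S) (hsub : f '' S ⊆ R) (hfin : R.Finite) (hcard : R.ncard ≤ 4) :
    S.Finite ∧ S.ncard ≤ 4 := by
  have h1 : (f '' S).Finite := hfin.subset hsub
  have h2 : S.Finite := Set.Finite.of_finite_image h1 hinj
  refine ⟨h2, ?_⟩
  rw [← Set.ncard_image_of_injOn hinj]
  exact le_trans (Set.ncard_le_ncard hsub hfin) hcard

/-- Over an algebraically closed field `k` of characteristic 2, with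
`a₁₀, a₀₁, b₁₀, b₀₁` not all zero and
`F = z² + x⁴y + xy⁴ + b₁₀²x³ + a₁₀²x²y + b₀₁²xy² + a₀₁²y³`, the singular locus of the
affine surface `F = 0` is exactly `{(x, y, 0) : a(x,y) = b(x,y) = 0}` where
`a = x² + a₁₀x + a₀₁y` and `b = y² + b₁₀x + b₀₁y`; in particular it is contained in the
plane `z = 0`, is finite, and has at most 4 points. -/
theorem stmt16 (k : Type*) [Field k] [IsAlgClosed k] [CharP k 2]
    (a₁₀ a₀₁ b₁₀ b₀₁ : k) (hne : ¬(a₁₀ = 0 ∧ a₀₁ = 0 ∧ b₁₀ = 0 ∧ b₀₁ = 0))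
    (F a b : MvPolynomial (Fin 3) k)
    (hF : F = X 2 ^ 2 + X 0 ^ 4 * X 1 + X 0 * X 1 ^ 4 + C (b₁₀ ^ 2) * X 0 ^ 3
      + C (a₁₀ ^ 2) * X 0 ^ 2 * X 1 + C (b₀₁ ^ 2) * X 0 * X 1 ^ 2 + C (a₀₁ ^ 2) * X 1 ^ 3)
    (ha : a = X 0 ^ 2 + C a₁₀ * X 0 + C a₀₁ * X 1)
    (hb : b = X 1 ^ 2 + C b₁₀ * X 0 + C b₀₁ * X 1)
    (SingLoc : Set (Fin 3 → k))
    (hS : SingLoc = {p | eval p F = 0 ∧ ∀ i, eval p (pderiv i F) = 0}) :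
    SingLoc = {p | eval p a = 0 ∧ eval p b = 0 ∧ p 2 = 0} ∧
    SingLoc.Finite ∧ SingLoc.ncard ≤ 4 := by
  classical
  have h2 : (2:k) = 0 := by exact_mod_cast CharP.cast_eq_zero k 2
  -- abbreviations
  set A : (Fin 3 → k) → k := fun p => p 0 ^ 2 + a₁₀ * p 0 + a₀₁ * p 1 with hA
  set B : (Fin 3 → k) → k := fun p => p 1 ^ 2 + b₁₀ * p 0 + b₀₁ * p 1 with hB
  have heva : ∀ p, eval p a = A p := by intro p; subst ha; simp [hA]
  have hevb : ∀ p, eval p b = B p := by intro p; subst hb; simp [hB]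
  have hd0 : ∀ p : Fin 3 → k, eval p (pderiv 0 F) = (B p) ^ 2 := by
    intro p; subst hF
    simp only [hB]
    simp [pderiv_mul, pderiv_X, pderiv_pow, Pi.single_apply]
    linear_combination (p 1 * p 0 * a₁₀^2 - p 1 * p 0 * b₀₁ * b₁₀ + 2 * p 1 * p 0^3
      - p 1^2 * p 0 * b₁₀ - p 1^3 * b₀₁ + p 0^2 * b₁₀^2) * h2
  have hd1 : ∀ p : Fin 3 → k, eval p (pderiv 1 F) = (A p) ^ 2 := by
    intro p; subst hF
    simp only [hA]
    simp [pderiv_mul, pderiv_X, pderiv_pow, Pi.single_apply]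
    linear_combination (p 0 * p 1 * b₀₁^2 - p 0 * p 1 * a₁₀ * a₀₁ + 2 * p 0 * p 1^3
      - p 0^2 * p 1 * a₀₁ - p 0^3 * a₁₀ + p 1^2 * a₀₁^2) * h2
  have hd2 : ∀ p : Fin 3 → k, eval p (pderiv 2 F) = 0 := by
    intro p; subst hF
    simp [pderiv_mul, pderiv_X, pderiv_pow, Pi.single_apply]
    exact Or.inl h2
  have hevF : ∀ p : Fin 3 → k, eval p F = p 2 ^ 2 + p 1 * (A p)^2 + p 0 * (B p)^2 := by
    intro p; subst hF
    simp only [hA, hB]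
    simp
    linear_combination (- p 1 * (p 0^2 * a₁₀ * p 0 + p 0^2 * a₀₁ * p 1 + a₁₀ * p 0 * a₀₁ * p 1)
      - p 0 * (p 1^2 * b₁₀ * p 0 + p 1^2 * b₀₁ * p 1 + b₁₀ * p 0 * b₀₁ * p 1)) * h2
  -- the set equality
  have hset : SingLoc = {p | A p = 0 ∧ B p = 0 ∧ p 2 = 0} := by
    rw [hS]; ext p
    simp only [Set.mem_setOf_eq]
    constructor
    · rintro ⟨hF0, hD⟩
      have h0 := hD 0; have h1 := hD 1
      rw [hd0] at h0; rw [hd1] at h1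
      have hBp : B p = 0 := by
        have := pow_eq_zero_iff (n := 2) (by norm_num) |>.mp h0; exact this
      have hAp : A p = 0 := by
        have := pow_eq_zero_iff (n := 2) (by norm_num) |>.mp h1; exact this
      refine ⟨hAp, hBp, ?_⟩
      rw [hevF, hAp, hBp] at hF0
      have : p 2 ^ 2 = 0 := by linear_combination hF0
      exact pow_eq_zero_iff (n := 2) (by norm_num) |>.mp this
    · rintro ⟨hAp, hBp, hz⟩
      refine ⟨?_, ?_⟩
      · rw [hevF, hAp, hBp, hz]; ring
      · intro i
        fin_cases i
        · show eval p (pderiv 0 F) = 0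
          rw [hd0, hBp]; ring
        · show eval p (pderiv 1 F) = 0
          rw [hd1, hAp]; ring
        · show eval p (pderiv 2 F) = 0
          exact hd2 p
  have hseteq : SingLoc = {p | eval p a = 0 ∧ eval p b = 0 ∧ p 2 = 0} := by
    rw [hset]; ext p; simp [heva, hevb]
  refine ⟨hseteq, ?_⟩
  rw [hset]
  set S : Set (Fin 3 → k) := {p | A p = 0 ∧ B p = 0 ∧ p 2 = 0} with hSdef
  -- case analysis
  by_cases ha01 : a₀₁ ≠ 0
  · -- x determines everything; x is a root of monic quartic q
    set q : Polynomial k := Polynomial.X^4 + Polynomial.C (a₁₀^2 + a₀₁*b₀₁) * Polynomial.X^2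
      + Polynomial.C (a₀₁^2*b₁₀ + a₀₁*b₀₁*a₁₀) * Polynomial.X with hq
    have hm : q.Monic := by unfold q; monicity!
    have hdq : q.natDegree ≤ 4 := by unfold q; compute_degree!
    obtain ⟨hfin, hcard⟩ := aux_rootset4 q hm hdq
    refine aux_transfer (fun p => p 0) ?_ ?_ hfin hcard
    · rintro p ⟨hAp, hBp, hzp⟩ p' ⟨hAp', hBp', hzp'⟩ (he : p 0 = p' 0)
      simp only [hA] at hAp hAp'
      have h1 : a₀₁ * p 1 = a₀₁ * p' 1 := by linear_combination hAp - hAp' - (p 0 + p' 0 + a₁₀) * he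
      have h1' : p 1 = p' 1 := mul_left_cancel₀ ha01 h1
      funext i; fin_cases i
      · exact he
      · exact h1'
      · show p 2 = p' 2; rw [hzp, hzp']
    · rintro _ ⟨p, ⟨hAp, hBp, hzp⟩, rfl⟩
      simp only [hA] at hAp; simp only [hB] at hBp
      show q.IsRoot (p 0)
      simp only [hq, Polynomial.IsRoot, Polynomial.eval_add, Polynomial.eval_mul,
        Polynomial.eval_pow, Polynomial.eval_C, Polynomial.eval_X]
      linear_combination (p 0^2 + a₁₀ * p 0 + a₀₁ * p 1 + a₀₁*b₀₁ - 2*a₀₁*(p 1)) * hAp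
        + a₀₁^2 * hBp + (- a₀₁^2*b₀₁*(p 1) - a₁₀*(p 0)^3 - a₁₀^2*(p 0)^2 - a₀₁*a₁₀*(p 0)*(p 1) + p 0*a₁₀*a₀₁*(p 1) + p 0^2*a₁₀^2) * h2
  · push_neg at ha01
    by_cases hb10 : b₁₀ ≠ 0
    · set q : Polynomial k := Polynomial.X^4 + Polynomial.C (b₀₁^2 + b₁₀*a₁₀) * Polynomial.X^2
        + Polynomial.C (b₁₀^2*a₀₁ + b₁₀*a₁₀*b₀₁) * Polynomial.X with hq
      have hm : q.Monic := by unfold q; monicity!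
      have hdq : q.natDegree ≤ 4 := by unfold q; compute_degree!
      obtain ⟨hfin, hcard⟩ := aux_rootset4 q hm hdq
      refine aux_transfer (fun p => p 1) ?_ ?_ hfin hcard
      · rintro p ⟨hAp, hBp, hzp⟩ p' ⟨hAp', hBp', hzp'⟩ (he : p 1 = p' 1)
        simp only [hB] at hBp hBp'
        have h1 : b₁₀ * p 0 = b₁₀ * p' 0 := by linear_combination hBp - hBp' - (p 1 + p' 1 + b₀₁) * he
        have h1' : p 0 = p' 0 := mul_left_cancel₀ hb10 h1
        funext i; fin_cases i
        · exact h1'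
        · exact he
        · show p 2 = p' 2; rw [hzp, hzp']
      · rintro _ ⟨p, ⟨hAp, hBp, hzp⟩, rfl⟩
        simp only [hA] at hAp; simp only [hB] at hBp
        show q.IsRoot (p 1)
        simp only [hq, Polynomial.IsRoot, Polynomial.eval_add, Polynomial.eval_mul,
          Polynomial.eval_pow, Polynomial.eval_C, Polynomial.eval_X]
        linear_combination (p 1^2 + b₀₁ * p 1 + b₁₀ * p 0 + b₁₀*a₁₀ - 2*b₁₀*(p 0)) * hBp
          + b₁₀^2 * hAp + (- b₁₀^2*a₁₀*(p 0) - b₀₁*(p 1)^3 - b₀₁^2*(p 1)^2 - b₁₀*b₀₁*(p 0)*(p 1) + (p 1)*b₀₁*b₁₀*(p 0) + (p 1)^2*b₀₁^2) * h2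
    · push_neg at hb10
      set qa : Polynomial k := Polynomial.X^2 + Polynomial.C a₁₀ * Polynomial.X with hqa
      set qb : Polynomial k := Polynomial.X^2 + Polynomial.C b₀₁ * Polynomial.X with hqb
      have hma : qa.Monic := by unfold qa; monicity!
      have hmb : qb.Monic := by unfold qb; monicity!
      refine aux_transfer (fun p => (p 0, p 1)) ?_
        (R := ↑(qa.roots.toFinset ×ˢ qb.roots.toFinset)) ?_ (Set.finite_coe_iff.mp ?_) ?_
      · rintro p ⟨hAp, hBp, hzp⟩ p' ⟨hAp', hBp', hzp'⟩ he
        have h0 : p 0 = p' 0 := congrArg Prod.fst he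
        have h1 : p 1 = p' 1 := congrArg Prod.snd he
        funext i; fin_cases i
        · exact h0
        · exact h1
        · show p 2 = p' 2; rw [hzp, hzp']
      · rintro _ ⟨p, ⟨hAp, hBp, hzp⟩, rfl⟩
        simp only [hA, ha01] at hAp; simp only [hB, hb10] at hBp
        have h0 : p 0 ∈ qa.roots.toFinset := by
          rw [Multiset.mem_toFinset, Polynomial.mem_roots hma.ne_zero]
          show qa.IsRoot (p 0)
          simp only [hqa, Polynomial.IsRoot, Polynomial.eval_add, Polynomial.eval_mul,
            Polynomial.eval_pow, Polynomial.eval_C, Polynomial.eval_X]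
          linear_combination hAp
        have h1 : p 1 ∈ qb.roots.toFinset := by
          rw [Multiset.mem_toFinset, Polynomial.mem_roots hmb.ne_zero]
          show qb.IsRoot (p 1)
          simp only [hqb, Polynomial.IsRoot, Polynomial.eval_add, Polynomial.eval_mul,
            Polynomial.eval_pow, Polynomial.eval_C, Polynomial.eval_X]
          linear_combination hBp
        exact Finset.mem_coe.mpr (Finset.mem_product.mpr ⟨h0, h1⟩)
      · exact Set.toFinite _
      · rw [Set.ncard_coe_finset, Finset.card_product]
        have h1 : qa.roots.toFinset.card ≤ 2 := by
          calc qa.roots.toFinset.card ≤ Multiset.card qa.roots := qa.roots.toFinset_card_le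
            _ ≤ qa.natDegree := qa.card_roots'
            _ ≤ 2 := by unfold qa; compute_degree!
        have h2' : qb.roots.toFinset.card ≤ 2 := by
          calc qb.roots.toFinset.card ≤ Multiset.card qb.roots := qb.roots.toFinset_card_le
            _ ≤ qb.natDegree := qb.card_roots'
            _ ≤ 2 := by unfold qb; compute_degree!
        calc qa.roots.toFinset.card * qb.roots.toFinset.card ≤ 2 * 2 :=
          Nat.mul_le_mul h1 h2'
          _ = 4 := rfl
end

section
/- Let k be a field of characteristic 2 and c ∈ k. On the elliptic curve E_c : Y² + cXY + Y = X³, the substitution u = X/Y and ū = −X/(Y + cX + 1) transforms the equation into u + ū + c·u·ū − (u·ū)² = 0, with the group identity at u = ū = 0 and the inversion map given by exchanging u and ū. -/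
/-- Let `k` have characteristic 2 and let `(X, Y)` be a point of
`E_c : Y² + cXY + Y = X³` with `Y ≠ 0` and `Y + cX + 1 ≠ 0`.  Setting `u = X/Y` and
`ū = −X/(Y + cX + 1)`, the equation becomes `u + ū + c·u·ū − (u·ū)² = 0`; moreover the
inverse point `(X, Y')` with `Y' = −Y − cX − 1 = Y + cX + 1` lies on the curve and its
pair of coordinates `(X/Y', −X/(Y' + cX + 1))` is `(ū, u)`, i.e. the inversion map
exchanges `u` and `ū`. -/
theorem stmt18 (k : Type*) [Field k] [CharP k 2] (c X Y : k)
    (hcurve : Y ^ 2 + c * X * Y + Y = X ^ 3)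
    (hY : Y ≠ 0) (hD : Y + c * X + 1 ≠ 0)
    (u ub Y' : k)
    (hu : u = X / Y) (hub : ub = -(X / (Y + c * X + 1)))
    (hY' : Y' = -Y - c * X - 1) :
    u + ub + c * u * ub - (u * ub) ^ 2 = 0 ∧
    Y' ^ 2 + c * X * Y' + Y' = X ^ 3 ∧
    X / Y' = ub ∧
    -(X / (Y' + c * X + 1)) = u := by
  have h2 : (2 : k) = 0 := by exact_mod_cast CharP.cast_eq_zero k 2
  have hY'eq : Y' = Y + c * X + 1 := by
    rw [hY']; linear_combination (-Y - c * X - 1) * h2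
  have hY'sum : Y' + c * X + 1 = Y := by
    rw [hY'eq]; linear_combination (c * X + 1) * h2
  subst hu hub
  refine ⟨?_, ?_, ?_, ?_⟩
  · have hD' : Y + X * c + 1 ≠ 0 := by rwa [mul_comm]
    field_simp
    linear_combination X * hcurve
  · rw [hY'eq]; linear_combination hcurve + (c * X * Y + Y + 2 * c * X + 1 + c ^ 2 * X ^ 2) * h2
  · rw [hY'eq]
    rw [neg_div' ]
    rw [div_eq_div_iff hD hD]
    ring_nf
    linear_combination (X * (Y + c * X + 1)) * h2
  · rw [hY'sum]
    rw [neg_div']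
    rw [div_eq_div_iff hY hY]
    linear_combination -(X * Y) * h2
end
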